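/- Fix ε > 0, w ∈ ℝ^L, and j ∈ [L]. Then there is a unique a ∈ ℝ satisfying w_j = a + ε/√2 − Σ_{k≠j} (w_k − a)_+. Moreover, defining v ∈ ℝ^L by v_j = a + ε/√2 and v_k = min{a, w_k} for k ≠ j, the vector v is the (unique) Euclidean projection of w onto R_j^ε, i.e. v = argmin_{u ∈ R_j^ε} ‖w − u‖. -/

import Mathlib

noncomputable section

/-- The set `R_j^ε = {w ∈ ℝ^L : w_j ≥ max_{ℓ≠j} w_ℓ + ε/√2}`. -/
def Rset (L : ℕ) (ε : ℝ) (j : Fin L) : Set (EuclideanSpace ℝ (Fin L)) :=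
  {w | ∀ ℓ : Fin L, ℓ ≠ j → w ℓ + ε / Real.sqrt 2 ≤ w j}

/-- The inflated argmax: `argmax^ε(w) = {j ∈ [L] : dist(w, R_j^ε) < ε}`. -/
def inflatedArgmax (L : ℕ) (ε : ℝ) (w : EuclideanSpace ℝ (Fin L)) : Set (Fin L) :=
  {j | Metric.infDist w (Rset L ε j) < ε}

/-- There is a unique `a ∈ ℝ` with `w_j = a + ε/√2 − Σ_{k≠j} (w_k − a)_+`; moreover, for
this `a`, the vector `v` with `v_j = a + ε/√2` and `v_k = min{a, w_k}` for `k ≠ j`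
is the unique Euclidean projection of `w` onto `R_j^ε`. -/
theorem projection_onto_Rset (L : ℕ) (hL : 2 ≤ L) (ε : ℝ) (hε : 0 < ε)
    (w : EuclideanSpace ℝ (Fin L)) (j : Fin L) :
    (∃! a : ℝ, w j = a + ε / Real.sqrt 2
        - ∑ k ∈ Finset.univ.erase j, max (w k - a) 0) ∧
    ∀ a : ℝ, w j = a + ε / Real.sqrt 2
        - ∑ k ∈ Finset.univ.erase j, max (w k - a) 0 →
      ∀ v : EuclideanSpace ℝ (Fin L),
        v j = a + ε / Real.sqrt 2 → (∀ k : Fin L, k ≠ j → v k = min a (w k)) →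
          v ∈ Rset L ε j ∧ ∀ u ∈ Rset L ε j, u ≠ v → dist w v < dist w u := by
  have hne : (Finset.univ : Finset (Fin L)).Nonempty := ⟨j, Finset.mem_univ j⟩
  set c := ε / Real.sqrt 2 with hcdef
  have hcpos : 0 < c := div_pos hε (Real.sqrt_pos.mpr two_pos)
  constructor
  · set f : ℝ → ℝ := fun a => a + c - ∑ k ∈ Finset.univ.erase j, max (w k - a) 0 with hfdef
    have hmono : StrictMono f := by
      intro a b hab
      have hS : ∑ k ∈ Finset.univ.erase j, max (w k - b) 0
          ≤ ∑ k ∈ Finset.univ.erase j, max (w k - a) 0 :=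
        Finset.sum_le_sum fun k _ => max_le_max (by linarith) le_rfl
      simp only [hfdef]
      linarith
    have hcont : Continuous f := by
      apply Continuous.sub (by fun_prop)
      exact continuous_finset_sum _ fun k _ =>
        (continuous_const.sub continuous_id).max continuous_const
    set M := Finset.univ.sup' hne w with hM
    set a₁ := max (w j - c) M with ha₁
    set a₀ := w j - c with ha₀
    have h01 : a₀ ≤ a₁ := le_max_left _ _
    have hf1 : w j ≤ f a₁ := by
      have hzero : ∀ k ∈ Finset.univ.erase j, max (w k - a₁) 0 = 0 := by
        intro k _
        have h1 : w k ≤ M := Finset.le_sup' w (Finset.mem_univ k)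
        have h2 : w k ≤ a₁ := h1.trans (le_max_right _ _)
        exact max_eq_right (by linarith)
      have h3 : w j - c ≤ a₁ := le_max_left _ _
      simp only [hfdef]
      rw [Finset.sum_eq_zero hzero]
      linarith
    have hf0 : f a₀ ≤ w j := by
      have h4 : 0 ≤ ∑ k ∈ Finset.univ.erase j, max (w k - a₀) 0 :=
        Finset.sum_nonneg fun k _ => le_max_right _ _
      simp only [hfdef, ha₀]
      linarith
    obtain ⟨a, -, ha⟩ := intermediate_value_Icc h01 hcont.continuousOn ⟨hf0, hf1⟩
    refine ⟨a, by simp only [hfdef] at ha; linarith, ?_⟩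
    intro b hb
    apply hmono.injective
    simp only [hfdef] at ha ⊢
    linarith
  · intro a ha v hvj hvk
    have hvmem : v ∈ Rset L ε j := by
      intro ℓ hℓ
      have h1 : v ℓ ≤ a := by rw [hvk ℓ hℓ]; exact min_le_left _ _
      rw [hvj]
      linarith
    refine ⟨hvmem, ?_⟩
    intro u hu hune
    have hwv : ∀ k, k ≠ j → w k - v k = max (w k - a) 0 := by
      intro k hk
      rw [hvk k hk]
      rcases le_total (w k) a with h | h
      · rw [min_eq_right h, max_eq_right (by linarith : w k - a ≤ 0)]; ring
      · rw [min_eq_left h, max_eq_left (by linarith : (0:ℝ) ≤ w k - a)]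
    have hwj : w j - v j = - ∑ k ∈ Finset.univ.erase j, max (w k - a) 0 := by
      rw [hvj]; linarith
    have hinner : (inner ℝ (w - v) (u - v) : ℝ) ≤ 0 := by
      have hsum : (inner ℝ (w - v) (u - v) : ℝ) = ∑ i, (w i - v i) * (u i - v i) := by
        simp [PiLp.inner_apply, RCLike.inner_apply, conj_trivial, mul_comm]
      rw [hsum, ← Finset.sum_erase_add _ _ (Finset.mem_univ j), hwj]
      have hterm : ∀ k ∈ Finset.univ.erase j,
          (w k - v k) * (u k - v k) = max (w k - a) 0 * (u k - v k) := by
        intro k hk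
        rw [hwv k (Finset.ne_of_mem_erase hk)]
      rw [Finset.sum_congr rfl hterm, neg_mul, Finset.sum_mul, ← Finset.sum_neg_distrib,
        ← Finset.sum_add_distrib]
      apply Finset.sum_nonpos
      intro k hk
      have hkj : k ≠ j := Finset.ne_of_mem_erase hk
      rcases le_total (w k) a with h | h
      · rw [max_eq_right (by linarith : w k - a ≤ 0)]; ring_nf; simp
      · have hm : max (w k - a) 0 = w k - a := max_eq_left (by linarith)
        have hvk' : v k = a := by rw [hvk k hkj, min_eq_left h]
        have huk : u k + c ≤ u j := hu k hkj
        rw [hm, hvk', hvj]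
        nlinarith [mul_nonneg (by linarith : (0:ℝ) ≤ w k - a)
          (by linarith : (0:ℝ) ≤ u j - u k - c)]
    have hne' : u - v ≠ 0 := sub_ne_zero.mpr hune
    have hpos : 0 < ‖u - v‖ ^ 2 := pow_pos (norm_pos_iff.mpr hne') 2
    have h1 : ‖(w - v) - (u - v)‖ ^ 2
        = ‖w - v‖ ^ 2 - 2 * (inner ℝ (w - v) (u - v) : ℝ) + ‖u - v‖ ^ 2 :=
      norm_sub_sq_real _ _
    have h2 : (w - v) - (u - v) = w - u := by abel
    rw [h2] at h1
    have key : ‖w - v‖ ^ 2 < ‖w - u‖ ^ 2 := by nlinarith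
    rw [dist_eq_norm, dist_eq_norm]
    exact lt_of_pow_lt_pow_left₀ 2 (norm_nonneg _) key
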